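/- The first moment of the Hamiltonian with respect to the uniform measure on the sphere is ⟨H⟩_0 = ∫ π_ME(z) dμ(z) = (d^{⌊n/2⌋} + d^{⌈n/2⌉})/(d^n + 1). -/

import Mathlib

set_option linter.unusedSectionVars false
set_option maxHeartbeats 1000000
open scoped BigOperators Classical ComplexOrder
open Finset MeasureTheory

noncomputable section

/-- Indicator (Kronecker delta) that two strings `k, l ∈ (ZMod d)^n` agree on all
positions in `A` (i.e. `k_A = l_A`). -/
def agree {d n : ℕ} (A : Finset (Fin n)) (k l : Fin n → ZMod d) : ℝ :=
  if ∀ j ∈ A, k j = l j then 1 else 0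

/-- Purity of a state `z` with respect to the bipartition `(A, Aᶜ)`:
`π_A(z) = ∑ z_k z_{k'} conj(z_l) conj(z_{l'}) [k'_A = l_A][k_A = l'_A][k_Ā = l_Ā][k'_Ā = l'_Ā]`. -/
def purity {d n : ℕ} [NeZero d] (A : Finset (Fin n)) (z : (Fin n → ZMod d) → ℂ) : ℂ :=
  ∑ k, ∑ k', ∑ l, ∑ l',
    z k * z k' * (starRingEnd ℂ) (z l) * (starRingEnd ℂ) (z l') *
      (agree A k' l : ℂ) * (agree A k l' : ℂ) * (agree Aᶜ k l : ℂ) * (agree Aᶜ k' l' : ℂ)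

/-- The potential of multipartite entanglement: the average of the purities over all
balanced bipartitions (`|A| = ⌊n/2⌋`). -/
def piME {d n : ℕ} [NeZero d] (z : (Fin n → ZMod d) → ℂ) : ℂ :=
  ((n.choose (n / 2) : ℂ))⁻¹ *
    ∑ A ∈ (Finset.univ : Finset (Fin n)).powersetCard (n / 2), purity A z

/-- A pure state of `n` qudits: a normalized vector of Fourier coefficients. -/
def IsPureState {d n : ℕ} [NeZero d] (z : (Fin n → ZMod d) → ℂ) : Prop :=
  ∑ k, ‖z k‖ ^ 2 = 1

instance euclideanComplexMeasurableSpace {ι : Type*} : MeasurableSpace (EuclideanSpace ℂ ι) :=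
  borel _

/-- `μ` is the uniform (unitarily invariant) probability measure on the unit sphere
`{z ∈ ℂ^N : ‖z‖ = 1}`: it is a probability measure carried by the sphere which is
invariant under every unitary transformation. -/
def IsUniformSphereMeasure {d n : ℕ} [NeZero d]
    (μ : Measure (EuclideanSpace ℂ (Fin n → ZMod d))) : Prop :=
  IsProbabilityMeasure μ ∧ μ {z | ‖z‖ ≠ 1} = 0 ∧
    ∀ U : EuclideanSpace ℂ (Fin n → ZMod d) ≃ₗᵢ[ℂ] EuclideanSpace ℂ (Fin n → ZMod d),
      Measure.map U μ = μ

/-- The Hamiltonian `H(z) = π_ME(z)`. -/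
def Hham {d n : ℕ} [NeZero d] (z : EuclideanSpace ℂ (Fin n → ZMod d)) : ℂ :=
  piME (fun k => z k)

/-- The partition function `Z(β) = ∫ e^{-β H(z)} dμ(z)`. -/
def Zfun {d n : ℕ} [NeZero d] (μ : Measure (EuclideanSpace ℂ (Fin n → ZMod d))) (β : ℂ) : ℂ :=
  ∫ z, Complex.exp (-β * Hham z) ∂μ

instance {ι : Type*} : BorelSpace (EuclideanSpace ℂ ι) := ⟨rfl⟩

variable {ι : Type*} [Fintype ι]

/-- basic monomial -/
def mono (k k' l l' : ι) (z : EuclideanSpace ℂ ι) : ℂ :=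
  z k * z k' * (starRingEnd ℂ) (z l) * (starRingEnd ℂ) (z l')

lemma continuous_coord (k : ι) : Continuous fun z : EuclideanSpace ℂ ι => z k :=
  (continuous_apply k).comp (PiLp.continuous_ofLp (p := 2) (β := fun _ : ι => ℂ))

lemma continuous_mono (k k' l l' : ι) : Continuous (mono k k' l l') := by
  unfold mono
  exact ((((continuous_coord k).mul (continuous_coord k')).mul
    (Complex.continuous_conj.comp (continuous_coord l))).mul
    (Complex.continuous_conj.comp (continuous_coord l')))

lemma norm_coord_le (z : EuclideanSpace ℂ ι) (k : ι) : ‖z k‖ ≤ ‖z‖ := by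
  rw [EuclideanSpace.norm_eq]
  have h1 : ‖z k‖ ^ 2 ≤ ∑ i, ‖z i‖ ^ 2 :=
    Finset.single_le_sum (f := fun i => ‖z i‖ ^ 2) (fun i _ => by positivity) (mem_univ k)
  calc ‖z k‖ = Real.sqrt (‖z k‖ ^ 2) := by rw [Real.sqrt_sq (norm_nonneg _)]
  _ ≤ _ := Real.sqrt_le_sqrt h1

lemma norm_mono_le (k k' l l' : ι) (z : EuclideanSpace ℂ ι) :
    ‖mono k k' l l' z‖ ≤ ‖z‖ ^ 4 := by
  unfold mono
  have h := fun j => norm_coord_le z j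
  calc ‖z k * z k' * (starRingEnd ℂ) (z l) * (starRingEnd ℂ) (z l')‖
      = ‖z k‖ * ‖z k'‖ * ‖z l‖ * ‖z l'‖ := by
        simp [norm_mul]
    _ ≤ ‖z‖ * ‖z‖ * ‖z‖ * ‖z‖ := by
        gcongr <;> exact h _
    _ = ‖z‖ ^ 4 := by ring

variable (μ : Measure (EuclideanSpace ℂ ι)) [IsProbabilityMeasure μ]

lemma ae_sphere (hμ : μ {z | ‖z‖ ≠ 1} = 0) : ∀ᵐ z ∂μ, ‖z‖ = 1 := by
  rw [MeasureTheory.ae_iff]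
  simpa using hμ

lemma integrable_mono (hμ : μ {z | ‖z‖ ≠ 1} = 0) (k k' l l' : ι) :
    Integrable (mono k k' l l') μ := by
  refine Integrable.mono' (integrable_const 1) (Continuous.aestronglyMeasurable ?_) ?_
  · exact continuous_mono k k' l l'
  · filter_upwards [ae_sphere μ hμ] with z hz
    calc ‖mono k k' l l' z‖ ≤ ‖z‖ ^ 4 := norm_mono_le k k' l l' z
    _ = 1 := by rw [hz]; norm_num

/-- integral invariance under unitaries -/
lemma integral_comp_unitary (hinv : ∀ U : EuclideanSpace ℂ ι ≃ₗᵢ[ℂ] EuclideanSpace ℂ ι,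
      Measure.map U μ = μ) (U : EuclideanSpace ℂ ι ≃ₗᵢ[ℂ] EuclideanSpace ℂ ι)
    (f : EuclideanSpace ℂ ι → ℂ) (hf : AEStronglyMeasurable f μ) :
    ∫ z, f z ∂μ = ∫ z, f (U z) ∂μ := by
  conv_lhs => rw [← hinv U]
  rw [integral_map]
  · exact (U.continuous.measurable).aemeasurable
  · rwa [hinv U]

/-- phase unitary: multiply coordinate j by I -/
def phaseU (j : ι) : EuclideanSpace ℂ ι ≃ₗᵢ[ℂ] EuclideanSpace ℂ ι where
  toFun z := WithLp.toLp 2 (fun i => if i = j then Complex.I * z i else z i)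
  invFun z := WithLp.toLp 2 (fun i => if i = j then (-Complex.I) * z i else z i)
  map_add' z w := by
    ext i
    simp only [PiLp.add_apply, PiLp.toLp_apply]
    split <;> ring
  map_smul' c z := by
    ext i
    simp only [PiLp.smul_apply, RingHom.id_apply, smul_eq_mul, PiLp.toLp_apply]
    split <;> ring
  left_inv z := by
    ext i
    simp only [PiLp.toLp_apply]
    split <;> [skip; rfl]
    ring_nf
    simp [Complex.I_sq]
  right_inv z := by
    ext i
    simp only [PiLp.toLp_apply]
    split <;> [skip; rfl]
    ring_nf
    simp [Complex.I_sq]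
  norm_map' z := by
    simp only [EuclideanSpace.norm_eq]
    congr 1
    refine Finset.sum_congr rfl fun i _ => ?_
    show ‖if i = j then Complex.I * z i else z i‖ ^ 2 = _
    split <;> simp

/-- rotation unitary mixing coordinates p and q -/
def rotFun (p q : ι) (z : EuclideanSpace ℂ ι) : EuclideanSpace ℂ ι :=
  WithLp.toLp 2 (fun i => if i = p then (z p + z q) / (Real.sqrt 2 : ℝ)
    else if i = q then (z p - z q) / (Real.sqrt 2 : ℝ) else z i)

lemma sqrt2C_mul : ((Real.sqrt 2 : ℝ) : ℂ) * ((Real.sqrt 2 : ℝ) : ℂ) = 2 := by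
  rw [← Complex.ofReal_mul, Real.mul_self_sqrt (by norm_num)]
  norm_num

lemma sqrt2C_ne : ((Real.sqrt 2 : ℝ) : ℂ) ≠ 0 := by
  simp [Real.sqrt_ne_zero']

lemma rotFun_invol (p q : ι) (hpq : p ≠ q) (z : EuclideanSpace ℂ ι) :
    rotFun p q (rotFun p q z) = z := by
  ext i
  simp only [rotFun, PiLp.toLp_apply, if_pos rfl, if_neg hpq, if_neg hpq.symm, if_pos rfl]
  split
  · rename_i h
    subst h
    simp only [if_true]
    rw [← add_div, div_div, sqrt2C_mul]
    ring
  · split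
    · rename_i h1 h2
      subst h2
      simp only [if_true]
      rw [← sub_div, div_div, sqrt2C_mul]
      ring
    · rfl

lemma norm_rot_pair (a b : ℂ) :
    ‖(a + b) / (Real.sqrt 2 : ℝ)‖ ^ 2 + ‖(a - b) / (Real.sqrt 2 : ℝ)‖ ^ 2
      = ‖a‖ ^ 2 + ‖b‖ ^ 2 := by
  have hp := parallelogram_law_with_norm ℂ a b
  have hn : ‖((Real.sqrt 2 : ℝ) : ℂ)‖ ^ 2 = 2 := by
    rw [Complex.norm_real, Real.norm_eq_abs, abs_of_nonneg (Real.sqrt_nonneg _),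
      Real.sq_sqrt (by norm_num)]
  rw [norm_div, norm_div, div_pow, div_pow, hn, ← add_div]
  rw [div_eq_iff (by norm_num : (2:ℝ) ≠ 0)]
  nlinarith [hp]

lemma norm_rotFun (p q : ι) (hpq : p ≠ q) (z : EuclideanSpace ℂ ι) :
    ‖rotFun p q z‖ = ‖z‖ := by
  simp only [EuclideanSpace.norm_eq]
  congr 1
  have hsub : ({p, q} : Finset ι) ⊆ univ := subset_univ _
  rw [← Finset.sum_sdiff hsub, ← Finset.sum_sdiff hsub]
  congr 1
  · refine Finset.sum_congr rfl fun i hi => ?_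
    simp only [Finset.mem_sdiff, Finset.mem_insert, Finset.mem_singleton] at hi
    push_neg at hi
    simp only [rotFun, PiLp.toLp_apply, if_neg hi.2.1, if_neg hi.2.2]
  · rw [Finset.sum_pair hpq, Finset.sum_pair hpq]
    show ‖rotFun p q z p‖ ^ 2 + ‖rotFun p q z q‖ ^ 2 = _
    simp only [rotFun, PiLp.toLp_apply, if_pos rfl, if_neg hpq.symm]
    exact norm_rot_pair (z p) (z q)

def rotU (p q : ι) (hpq : p ≠ q) : EuclideanSpace ℂ ι ≃ₗᵢ[ℂ] EuclideanSpace ℂ ι where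
  toFun := rotFun p q
  invFun := rotFun p q
  map_add' z w := by
    ext i
    simp only [rotFun, PiLp.add_apply, PiLp.toLp_apply]
    split
    · ring
    · split
      · ring
      · rfl
  map_smul' c z := by
    ext i
    simp only [rotFun, PiLp.smul_apply, RingHom.id_apply, smul_eq_mul, PiLp.toLp_apply]
    split
    · ring
    · split
      · ring
      · rfl
  left_inv := rotFun_invol p q hpq
  right_inv := rotFun_invol p q hpq
  norm_map' := norm_rotFun p q hpq

@[simp] lemma phaseU_apply (j : ι) (z : EuclideanSpace ℂ ι) (i : ι) :
    phaseU j z i = if i = j then Complex.I * z i else z i := rfl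

lemma rotU_apply (p q : ι) (hpq : p ≠ q) (z : EuclideanSpace ℂ ι) :
    rotU p q hpq z = rotFun p q z := rfl

/-- the fourth moment -/
def mm (k k' l l' : ι) : ℂ := ∫ z, mono k k' l l' z ∂μ

variable {μ}

lemma mono_swap12 (k k' l l' : ι) : mono (ι := ι) k k' l l' = mono k' k l l' := by
  funext z; unfold mono; ring

lemma mono_swap34 (k k' l l' : ι) : mono (ι := ι) k k' l l' = mono k k' l' l := by
  funext z; unfold mono; ring

lemma mm_swap12 (k k' l l' : ι) : mm μ k k' l l' = mm μ k' k l l' := by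
  unfold mm; rw [mono_swap12]

lemma mm_swap34 (k k' l l' : ι) : mm μ k k' l l' = mm μ k k' l' l := by
  unfold mm; rw [mono_swap34]

lemma mono_phase (j k k' l l' : ι) (z : EuclideanSpace ℂ ι) :
    mono k k' l l' (phaseU j z) =
      ((if k = j then Complex.I else 1) * (if k' = j then Complex.I else 1) *
        (if l = j then -Complex.I else 1) * (if l' = j then -Complex.I else 1)) *
        mono k k' l l' z := by
  unfold mono
  simp only [phaseU_apply, apply_ite (starRingEnd ℂ), map_mul, Complex.conj_I]
  split_ifs <;> ring

lemma mm_phase (hu : ∀ U : EuclideanSpace ℂ ι ≃ₗᵢ[ℂ] EuclideanSpace ℂ ι,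
      Measure.map U μ = μ) (j k k' l l' : ι) :
    mm μ k k' l l' =
      ((if k = j then Complex.I else 1) * (if k' = j then Complex.I else 1) *
        (if l = j then -Complex.I else 1) * (if l' = j then -Complex.I else 1)) *
        mm μ k k' l l' := by
  calc mm μ k k' l l' = ∫ z, mono k k' l l' (phaseU j z) ∂μ :=
        integral_comp_unitary μ hu (phaseU j) _
          (continuous_mono k k' l l').aestronglyMeasurable
    _ = _ := by
        simp only [mono_phase]
        rw [integral_const_mul]
        rfl

lemma mm_zero_of_ne (hu : ∀ U : EuclideanSpace ℂ ι ≃ₗᵢ[ℂ] EuclideanSpace ℂ ι,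
      Measure.map U μ = μ) (k k' l l' : ι)
    (h : ¬((l = k ∧ l' = k') ∨ (l = k' ∧ l' = k))) : mm μ k k' l l' = 0 := by
  push_neg at h
  obtain ⟨h1, h2⟩ := h
  have key : ∃ j : ι, ((if k = j then Complex.I else 1) * (if k' = j then Complex.I else 1) *
      (if l = j then -Complex.I else 1) * (if l' = j then -Complex.I else 1)) ≠ 1 := by
    have hnI : -Complex.I ≠ 1 := by
      intro hc
      simpa using congrArg Complex.im hc
    have hn1 : (-1 : ℂ) ≠ 1 := by norm_num
    by_cases hlk : l = k
    · have hl'k' : l' ≠ k' := by tauto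
      by_cases hl'l : l' = l
      · refine ⟨l, ?_⟩
        have hk'l : k' ≠ l := fun hh => hl'k' (hl'l.trans hh.symm)
        rw [if_pos hlk.symm, if_neg hk'l, if_pos rfl, if_pos hl'l]
        intro hc; simp [Complex.ext_iff] at hc
      · refine ⟨l', ?_⟩
        have hkl' : k ≠ l' := fun hh => hl'l (hh ▸ hlk).symm
        have hll' : l ≠ l' := fun hh => hl'l hh.symm
        rw [if_neg hkl', if_neg (fun hh => hl'k' hh.symm), if_neg hll', if_pos rfl]
        intro hc; simp [Complex.ext_iff] at hc
    · by_cases hlk' : l = k'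
      · have hl'k : l' ≠ k := by tauto
        refine ⟨l', ?_⟩
        have hkl' : k ≠ l' := fun hh => hl'k hh.symm
        rw [if_neg hkl', if_pos rfl]
        by_cases hk'l' : k' = l'
        · rw [if_pos hk'l', if_pos (hlk'.trans hk'l')]
          intro hc; simp [Complex.ext_iff] at hc
        · rw [if_neg hk'l', if_neg (fun hh => hk'l' (hlk' ▸ hh))]
          intro hc; simp [Complex.ext_iff] at hc
      · refine ⟨l, ?_⟩
        rw [if_neg (fun hh => hlk hh.symm), if_neg (fun hh => hlk' hh.symm), if_pos rfl]
        by_cases hl'l : l' = l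
        · rw [if_pos hl'l]
          intro hc; simp only [one_mul] at hc; exact hn1 (by linear_combination hc - Complex.I_mul_I)
        · rw [if_neg hl'l]
          intro hc; simp [Complex.ext_iff] at hc
  obtain ⟨j, hj⟩ := key
  have heq := mm_phase hu j k k' l l'
  set c := ((if k = j then Complex.I else 1) * (if k' = j then Complex.I else 1) *
      (if l = j then -Complex.I else 1) * (if l' = j then -Complex.I else 1)) with hc
  have h0 : (1 - c) * mm μ k k' l l' = 0 := by linear_combination heq
  rcases mul_eq_zero.mp h0 with h | h
  · exact absurd (by linear_combination -h) hj
  · exact h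

lemma div_s_pow4 (w : ℂ) :
    w / ((Real.sqrt 2 : ℝ) : ℂ) * (w / ((Real.sqrt 2 : ℝ) : ℂ)) *
      (starRingEnd ℂ) (w / ((Real.sqrt 2 : ℝ) : ℂ)) *
      (starRingEnd ℂ) (w / ((Real.sqrt 2 : ℝ) : ℂ)) =
    (1/4) * (w * w * (starRingEnd ℂ) w * (starRingEnd ℂ) w) := by
  rw [map_div₀, Complex.conj_ofReal]
  rw [div_mul_div_comm, div_mul_div_comm, div_mul_div_comm]
  have h4 : ((Real.sqrt 2 : ℝ) : ℂ) * ((Real.sqrt 2 : ℝ) : ℂ) * ((Real.sqrt 2 : ℝ) : ℂ) *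
      ((Real.sqrt 2 : ℝ) : ℂ) = 4 := by
    rw [mul_assoc (((Real.sqrt 2 : ℝ) : ℂ) * ((Real.sqrt 2 : ℝ) : ℂ)), sqrt2C_mul]
    norm_num
  rw [h4]
  ring

def sgn2 : Fin 2 → ℂ := ![1, -1]

lemma rot_mono_p (p q : ι) (hpq : p ≠ q) (z : EuclideanSpace ℂ ι) :
    mono p p p p (rotFun p q z) =
      (1/4) * ∑ u : Fin 2 × Fin 2 × Fin 2 × Fin 2,
        mono (![p,q] u.1) (![p,q] u.2.1) (![p,q] u.2.2.1) (![p,q] u.2.2.2) z := by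
  have h1 : rotFun p q z p = (z p + z q) / ((Real.sqrt 2 : ℝ) : ℂ) := by
    simp [rotFun]
  unfold mono
  rw [h1, div_s_pow4]
  simp only [Fintype.sum_prod_type, Fin.sum_univ_two, Matrix.cons_val_zero,
    Matrix.cons_val_one, Matrix.head_cons, map_add]
  ring

lemma rot_mono_q (p q : ι) (hpq : p ≠ q) (z : EuclideanSpace ℂ ι) :
    mono q q q q (rotFun p q z) =
      (1/4) * ∑ u : Fin 2 × Fin 2 × Fin 2 × Fin 2,
        (sgn2 u.1 * sgn2 u.2.1 * sgn2 u.2.2.1 * sgn2 u.2.2.2) *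
          mono (![p,q] u.1) (![p,q] u.2.1) (![p,q] u.2.2.1) (![p,q] u.2.2.2) z := by
  have h1 : rotFun p q z q = (z p - z q) / ((Real.sqrt 2 : ℝ) : ℂ) := by
    simp [rotFun, if_neg hpq.symm]
  unfold mono
  rw [h1, div_s_pow4]
  simp only [Fintype.sum_prod_type, Fin.sum_univ_two, Matrix.cons_val_zero,
    Matrix.cons_val_one, Matrix.head_cons, map_add, map_sub, sgn2]
  ring

lemma mm_rot_p (hs : μ {z | ‖z‖ ≠ 1} = 0)
    (hu : ∀ U : EuclideanSpace ℂ ι ≃ₗᵢ[ℂ] EuclideanSpace ℂ ι, Measure.map U μ = μ)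
    (p q : ι) (hpq : p ≠ q) :
    mm μ p p p p = (1/4) * ∑ u : Fin 2 × Fin 2 × Fin 2 × Fin 2,
        mm μ (![p,q] u.1) (![p,q] u.2.1) (![p,q] u.2.2.1) (![p,q] u.2.2.2) := by
  calc mm μ p p p p = ∫ z, mono p p p p (rotU p q hpq z) ∂μ :=
        integral_comp_unitary μ hu (rotU p q hpq) _
          (continuous_mono p p p p).aestronglyMeasurable
    _ = ∫ z, (1/4) * ∑ u : Fin 2 × Fin 2 × Fin 2 × Fin 2,
        mono (![p,q] u.1) (![p,q] u.2.1) (![p,q] u.2.2.1) (![p,q] u.2.2.2) z ∂μ := by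
        simp only [rotU_apply, rot_mono_p p q hpq]
    _ = _ := by
        rw [integral_const_mul, integral_finset_sum]
        · rfl
        · exact fun u _ => integrable_mono μ hs _ _ _ _

lemma mm_rot_q (hs : μ {z | ‖z‖ ≠ 1} = 0)
    (hu : ∀ U : EuclideanSpace ℂ ι ≃ₗᵢ[ℂ] EuclideanSpace ℂ ι, Measure.map U μ = μ)
    (p q : ι) (hpq : p ≠ q) :
    mm μ q q q q = (1/4) * ∑ u : Fin 2 × Fin 2 × Fin 2 × Fin 2,
        (sgn2 u.1 * sgn2 u.2.1 * sgn2 u.2.2.1 * sgn2 u.2.2.2) *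
          mm μ (![p,q] u.1) (![p,q] u.2.1) (![p,q] u.2.2.1) (![p,q] u.2.2.2) := by
  calc mm μ q q q q = ∫ z, mono q q q q (rotU p q hpq z) ∂μ :=
        integral_comp_unitary μ hu (rotU p q hpq) _
          (continuous_mono q q q q).aestronglyMeasurable
    _ = ∫ z, (1/4) * ∑ u : Fin 2 × Fin 2 × Fin 2 × Fin 2,
        (sgn2 u.1 * sgn2 u.2.1 * sgn2 u.2.2.1 * sgn2 u.2.2.2) *
          mono (![p,q] u.1) (![p,q] u.2.1) (![p,q] u.2.2.1) (![p,q] u.2.2.2) z ∂μ := by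
        simp only [rotU_apply, rot_mono_q p q hpq]
    _ = _ := by
        rw [integral_const_mul, integral_finset_sum]
        · simp only [integral_const_mul]
          rfl
        · exact fun u _ => ((integrable_mono μ hs _ _ _ _).const_mul _)

lemma mm_relations (hs : μ {z | ‖z‖ ≠ 1} = 0)
    (hu : ∀ U : EuclideanSpace ℂ ι ≃ₗᵢ[ℂ] EuclideanSpace ℂ ι, Measure.map U μ = μ)
    (p q : ι) (hpq : p ≠ q) :
    mm μ q q q q = mm μ p p p p ∧ mm μ p q p q = mm μ p p p p / 2 := by
  have hp := mm_rot_p hs hu p q hpq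
  have hq := mm_rot_q hs hu p q hpq
  simp only [Fintype.sum_prod_type, Fin.sum_univ_two, Matrix.cons_val_zero,
    Matrix.cons_val_one, Matrix.head_cons, sgn2] at hp hq
  have z1 : mm μ p p p q = 0 := mm_zero_of_ne hu _ _ _ _ (by simp [hpq, hpq.symm])
  have z2 : mm μ p p q p = 0 := mm_zero_of_ne hu _ _ _ _ (by simp [hpq, hpq.symm])
  have z3 : mm μ p p q q = 0 := mm_zero_of_ne hu _ _ _ _ (by simp [hpq, hpq.symm])
  have z4 : mm μ p q p p = 0 := mm_zero_of_ne hu _ _ _ _ (by simp [hpq, hpq.symm])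
  have z5 : mm μ p q q q = 0 := mm_zero_of_ne hu _ _ _ _ (by simp [hpq, hpq.symm])
  have z6 : mm μ q p p p = 0 := mm_zero_of_ne hu _ _ _ _ (by simp [hpq, hpq.symm])
  have z7 : mm μ q p q q = 0 := mm_zero_of_ne hu _ _ _ _ (by simp [hpq, hpq.symm])
  have z8 : mm μ q q p p = 0 := mm_zero_of_ne hu _ _ _ _ (by simp [hpq, hpq.symm])
  have z9 : mm μ q q p q = 0 := mm_zero_of_ne hu _ _ _ _ (by simp [hpq, hpq.symm])
  have z10 : mm μ q q q p = 0 := mm_zero_of_ne hu _ _ _ _ (by simp [hpq, hpq.symm])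
  have s1 : mm μ p q q p = mm μ p q p q := (mm_swap34 p q q p).trans rfl
  have s2 : mm μ q p p q = mm μ p q p q := mm_swap12 q p p q
  have s3 : mm μ q p q p = mm μ p q p q := (mm_swap12 q p q p).trans (mm_swap34 p q q p)
  rw [z1, z2, z3, z4, z5, z6, z7, z8, z9, z10, s1, s2, s3] at hp hq
  constructor
  · linear_combination hq - hp
  · linear_combination (-(3:ℂ)/4) * hp - (1/4) * hq

lemma sum_mul_conj_eq_one (z : EuclideanSpace ℂ ι) (hz : ‖z‖ = 1) :
    ∑ k : ι, z k * (starRingEnd ℂ) (z k) = 1 := by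
  have h1 : ∑ k : ι, ‖z k‖ ^ 2 = 1 := by
    have := EuclideanSpace.norm_eq z
    rw [hz] at this
    have h2 := this.symm
    rwa [Real.sqrt_eq_one] at h2
  have h3 : ∀ k : ι, z k * (starRingEnd ℂ) (z k) = ((‖z k‖ ^ 2 : ℝ) : ℂ) := by
    intro k
    rw [Complex.mul_conj, Complex.normSq_eq_norm_sq]
  rw [Finset.sum_congr rfl fun k _ => h3 k, ← Complex.ofReal_sum]
  rw [h1]
  norm_num

lemma mm_norm_sum (hs : μ {z | ‖z‖ ≠ 1} = 0) :
    ∑ k : ι, ∑ l : ι, mm μ k l k l = 1 := by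
  calc ∑ k : ι, ∑ l : ι, mm μ k l k l
      = ∫ z, ∑ k : ι, ∑ l : ι, mono k l k l z ∂μ := by
        rw [integral_finset_sum _
          (fun k _ => integrable_finset_sum _ fun l _ => integrable_mono μ hs _ _ _ _)]
        exact Finset.sum_congr rfl fun k _ =>
          (integral_finset_sum _ fun l _ => integrable_mono μ hs _ _ _ _).symm
    _ = ∫ _, (1:ℂ) ∂μ := by
        refine integral_congr_ae ?_
        filter_upwards [ae_sphere μ hs] with z hz
        calc ∑ k : ι, ∑ l : ι, mono k l k l z
            = (∑ k : ι, z k * (starRingEnd ℂ) (z k)) *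
              (∑ l : ι, z l * (starRingEnd ℂ) (z l)) := by
              rw [Finset.sum_mul_sum]
              exact Finset.sum_congr rfl fun k _ => Finset.sum_congr rfl fun l _ => by
                unfold mono; ring
          _ = 1 := by rw [sum_mul_conj_eq_one z hz]; norm_num
    _ = 1 := by simp

lemma mm_diag_value (hs : μ {z | ‖z‖ ≠ 1} = 0)
    (hu : ∀ U : EuclideanSpace ℂ ι ≃ₗᵢ[ℂ] EuclideanSpace ℂ ι, Measure.map U μ = μ)
    (p : ι) (hcard : 2 ≤ Fintype.card ι) :
    mm μ p p p p = 2 / ((Fintype.card ι : ℂ) * ((Fintype.card ι : ℂ) + 1)) := by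
  set N := (Fintype.card ι : ℂ) with hN
  set b := mm μ p p p p with hb
  have hform : ∀ k l : ι, mm μ k l k l = b / 2 + (if k = l then b / 2 else 0) := by
    intro k l
    by_cases hkl : k = l
    · subst hkl
      rw [if_pos rfl]
      have : mm μ k k k k = b := by
        by_cases hkp : k = p
        · rw [hkp]
        · exact (mm_relations hs hu p k (fun hh => hkp hh.symm)).1
      rw [this]; ring
    · rw [if_neg hkl]
      have h1 := (mm_relations hs hu k l hkl).2
      have h2 : mm μ k k k k = b := by
        by_cases hkp : k = p
        · rw [hkp]
        · exact (mm_relations hs hu p k (fun hh => hkp hh.symm)).1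
      rw [h1, h2]
      ring
  have hsum := mm_norm_sum (μ := μ) hs
  rw [Finset.sum_congr rfl (fun k _ => Finset.sum_congr rfl fun l _ => hform k l)] at hsum
  simp only [Finset.sum_add_distrib, Finset.sum_const, Finset.sum_ite_eq,
    Finset.mem_univ, if_true, Finset.card_univ, nsmul_eq_mul] at hsum
  -- hsum : N * (N * (b/2)) + N * (b/2) = 1  (roughly)
  have hN0 : N ≠ 0 := by
    simp only [hN, Ne, Nat.cast_eq_zero]
    omega
  have hN1 : N + 1 ≠ 0 := by
    intro hc
    have : (Fintype.card ι : ℂ) = -1 := by linear_combination hc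
    have h2 : ((Fintype.card ι : ℝ) : ℂ) = ((-1 : ℝ) : ℂ) := by push_cast; linear_combination this
    have h3 : (Fintype.card ι : ℝ) = -1 := Complex.ofReal_injective h2
    have : (0:ℝ) ≤ (Fintype.card ι : ℝ) := Nat.cast_nonneg _
    linarith
  rw [← hN] at hsum
  rw [eq_div_iff (mul_ne_zero hN0 hN1)]
  linear_combination 2 * hsum

lemma mm_master (hs : μ {z | ‖z‖ ≠ 1} = 0)
    (hu : ∀ U : EuclideanSpace ℂ ι ≃ₗᵢ[ℂ] EuclideanSpace ℂ ι, Measure.map U μ = μ)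
    (hcard : 2 ≤ Fintype.card ι) (k k' l l' : ι) :
    mm μ k k' l l' = (1 / ((Fintype.card ι : ℂ) * ((Fintype.card ι : ℂ) + 1))) *
      ((if l = k ∧ l' = k' then 1 else 0) + (if l = k' ∧ l' = k then 1 else 0)) := by
  by_cases h1 : l = k ∧ l' = k'
  · rw [h1.1, h1.2, if_pos ⟨rfl, rfl⟩]
    by_cases hkk : k = k'
    · rw [hkk, if_pos ⟨rfl, rfl⟩, mm_diag_value hs hu k' hcard]
      ring
    · rw [if_neg (fun hc => hkk hc.2.symm), (mm_relations hs hu k k' hkk).2,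
        mm_diag_value hs hu k hcard]
      ring
  · by_cases h2 : l = k' ∧ l' = k
    · have hkk : k ≠ k' := by
        intro hc
        exact h1 ⟨h2.1.trans hc.symm, h2.2.trans hc⟩
      rw [h2.1, h2.2, if_neg (fun hc => hkk hc.1.symm), if_pos ⟨rfl, rfl⟩]
      rw [mm_swap34, (mm_relations hs hu k k' hkk).2, mm_diag_value hs hu k hcard]
      ring
    · rw [mm_zero_of_ne hu _ _ _ _ (by tauto), if_neg h1, if_neg h2]
      ring

section counting

variable {d n : ℕ} [NeZero d]

lemma agree_refl (A : Finset (Fin n)) (k : Fin n → ZMod d) : agree A k k = 1 := by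
  simp [agree]

lemma agree_symm (A : Finset (Fin n)) (k l : Fin n → ZMod d) : agree A k l = agree A l k := by
  unfold agree
  simp only [eq_comm]

lemma agree_mul_self (A : Finset (Fin n)) (k l : Fin n → ZMod d) :
    (agree A k l : ℂ) * (agree A k l : ℂ) = (agree A k l : ℂ) := by
  unfold agree
  split_ifs <;> norm_num

lemma sum_agree (A : Finset (Fin n)) (k : Fin n → ZMod d) :
    ∑ k' : Fin n → ZMod d, (agree A k k' : ℂ) = (d : ℂ) ^ (n - A.card) := by
  have h1 : ∑ k' : Fin n → ZMod d, (agree A k k' : ℂ)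
      = ((Finset.univ.filter fun k' : Fin n → ZMod d => ∀ j ∈ A, k j = k' j).card : ℂ) := by
    rw [Finset.card_filter]
    push_cast
    refine Finset.sum_congr rfl fun k' _ => ?_
    unfold agree
    split_ifs <;> simp
  rw [h1]
  have h2 : (Finset.univ.filter fun k' : Fin n → ZMod d => ∀ j ∈ A, k j = k' j).card
      = d ^ (n - A.card) := by
    rw [← Fintype.card_subtype]
    have e : {k' : Fin n → ZMod d // ∀ j ∈ A, k j = k' j} ≃ ({j : Fin n // j ∉ A} → ZMod d) :=
      { toFun := fun f j => f.1 j.1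
        invFun := fun g => ⟨fun j => if h : j ∈ A then k j else g ⟨j, h⟩,
          fun j hj => by simp [dif_pos hj]⟩
        left_inv := fun f => Subtype.ext (funext fun j => by
          by_cases h : j ∈ A
          · simp [dif_pos h, f.2 j h]
          · simp [dif_neg h])
        right_inv := fun g => funext fun j => by simp [dif_neg j.2] }
    rw [Fintype.card_congr e, Fintype.card_fun, ZMod.card d]
    congr 1
    rw [Fintype.card_subtype_compl, Fintype.card_fin]
    congr 1
    exact Fintype.card_coe A
  rw [h2]
  push_cast
  ring

lemma sum_sum_agree (A : Finset (Fin n)) :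
    ∑ k : Fin n → ZMod d, ∑ k' : Fin n → ZMod d, (agree A k k' : ℂ)
      = (d : ℂ) ^ n * (d : ℂ) ^ (n - A.card) := by
  rw [Finset.sum_congr rfl fun k _ => sum_agree A k, Finset.sum_const, Finset.card_univ,
    nsmul_eq_mul]
  congr 1
  rw [Fintype.card_fun, ZMod.card d, Fintype.card_fin]
  push_cast
  ring

end counting

lemma integral_purity {d n : ℕ} [NeZero d] (μ : Measure (EuclideanSpace ℂ (Fin n → ZMod d)))
    [IsProbabilityMeasure μ] (hs : μ {z | ‖z‖ ≠ 1} = 0)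
    (hu : ∀ U : EuclideanSpace ℂ (Fin n → ZMod d) ≃ₗᵢ[ℂ] EuclideanSpace ℂ (Fin n → ZMod d),
      Measure.map U μ = μ)
    (hcard : 2 ≤ Fintype.card (Fin n → ZMod d)) (A : Finset (Fin n)) :
    ∫ z, purity A (fun k => z k) ∂μ =
      (1 / ((Fintype.card (Fin n → ZMod d) : ℂ) * ((Fintype.card (Fin n → ZMod d) : ℂ) + 1))) *
        ((d : ℂ) ^ n * (d : ℂ) ^ (n - A.card) + (d : ℂ) ^ n * (d : ℂ) ^ (n - Aᶜ.card)) := by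
  set a : ℂ := 1 / ((Fintype.card (Fin n → ZMod d) : ℂ) *
    ((Fintype.card (Fin n → ZMod d) : ℂ) + 1)) with ha
  have hrew : (fun z : EuclideanSpace ℂ (Fin n → ZMod d) => purity A (fun k => z k)) =
      fun z => ∑ k, ∑ k', ∑ l, ∑ l', mono k k' l l' z *
        ((agree A k' l : ℂ) * (agree A k l' : ℂ) * (agree Aᶜ k l : ℂ) *
          (agree Aᶜ k' l' : ℂ)) := by
    funext z
    unfold purity mono
    exact Finset.sum_congr rfl fun k _ => Finset.sum_congr rfl fun k' _ =>
      Finset.sum_congr rfl fun l _ => Finset.sum_congr rfl fun l' _ => by ring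
  have hint : ∀ (k k' l l' : Fin n → ZMod d), Integrable (fun z => mono k k' l l' z *
      ((agree A k' l : ℂ) * (agree A k l' : ℂ) * (agree Aᶜ k l : ℂ) *
        (agree Aᶜ k' l' : ℂ))) μ :=
    fun k k' l l' => (integrable_mono μ hs k k' l l').mul_const _
  rw [hrew]
  rw [integral_finset_sum _ (fun k _ => integrable_finset_sum _ fun k' _ =>
    integrable_finset_sum _ fun l _ => integrable_finset_sum _ fun l' _ => hint k k' l l')]
  have hswap : ∀ k : Fin n → ZMod d,
      ∫ z, (∑ k', ∑ l, ∑ l', mono k k' l l' z *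
        ((agree A k' l : ℂ) * (agree A k l' : ℂ) * (agree Aᶜ k l : ℂ) *
          (agree Aᶜ k' l' : ℂ))) ∂μ
      = ∑ k', ∑ l, ∑ l', mm μ k k' l l' *
        ((agree A k' l : ℂ) * (agree A k l' : ℂ) * (agree Aᶜ k l : ℂ) *
          (agree Aᶜ k' l' : ℂ)) := by
    intro k
    rw [integral_finset_sum _ (fun k' _ => integrable_finset_sum _ fun l _ =>
      integrable_finset_sum _ fun l' _ => hint k k' l l')]
    refine Finset.sum_congr rfl fun k' _ => ?_
    rw [integral_finset_sum _ (fun l _ => integrable_finset_sum _ fun l' _ => hint k k' l l')]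
    refine Finset.sum_congr rfl fun l _ => ?_
    rw [integral_finset_sum _ (fun l' _ => hint k k' l l')]
    exact Finset.sum_congr rfl fun l' _ => integral_mul_const _ _
  rw [Finset.sum_congr rfl fun k _ => hswap k]
  have hinner : ∀ k k' : Fin n → ZMod d,
      (∑ l, ∑ l', mm μ k k' l l' *
        ((agree A k' l : ℂ) * (agree A k l' : ℂ) * (agree Aᶜ k l : ℂ) *
          (agree Aᶜ k' l' : ℂ)))
      = a * ((agree A k k' : ℂ) + (agree Aᶜ k k' : ℂ)) := by
    intro k k'
    have hterm : ∀ l l' : Fin n → ZMod d,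
        mm μ k k' l l' *
          ((agree A k' l : ℂ) * (agree A k l' : ℂ) * (agree Aᶜ k l : ℂ) *
            (agree Aᶜ k' l' : ℂ))
        = (if l = k then (if l' = k' then a * ((agree A k' l : ℂ) * (agree A k l' : ℂ) *
            (agree Aᶜ k l : ℂ) * (agree Aᶜ k' l' : ℂ)) else 0) else 0)
          + (if l = k' then (if l' = k then a * ((agree A k' l : ℂ) * (agree A k l' : ℂ) *
            (agree Aᶜ k l : ℂ) * (agree Aᶜ k' l' : ℂ)) else 0) else 0) := by
      intro l l'
      rw [mm_master hs hu hcard k k' l l', ← ha]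
      rw [← ite_and, ← ite_and]
      split_ifs <;> ring
    rw [Finset.sum_congr rfl fun l _ => Finset.sum_congr rfl fun l' _ => hterm l l']
    simp only [Finset.sum_add_distrib]
    have c1 : ∀ (kk kk' : Fin n → ZMod d) (f : (Fin n → ZMod d) → (Fin n → ZMod d) → ℂ),
        (∑ l, ∑ l', (if l = kk then if l' = kk' then f l l' else 0 else 0)) = f kk kk' := by
      intro kk kk' f
      have hrow : ∀ l, (∑ l', (if l = kk then if l' = kk' then f l l' else 0 else 0))
          = if l = kk then f l kk' else 0 := by
        intro l
        by_cases hl : l = kk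
        · simp only [if_pos hl]
          exact Fintype.sum_ite_eq' kk' (f l)
        · simp [hl]
      rw [Finset.sum_congr rfl fun l _ => hrow l]
      exact Fintype.sum_ite_eq' kk (fun l => f l kk')
    rw [c1 k k' _, c1 k' k _]
    rw [agree_refl Aᶜ k, agree_refl Aᶜ k', agree_refl A k', agree_refl A k,
      agree_symm A k' k, agree_symm Aᶜ k' k]
    push_cast
    have hx := agree_mul_self A k k'
    have hy := agree_mul_self Aᶜ k k'
    linear_combination a * hx + a * hy
  rw [Finset.sum_congr rfl fun k _ => Finset.sum_congr rfl fun k' _ => hinner k k']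
  simp only [mul_add, Finset.sum_add_distrib, ← Finset.mul_sum]
  rw [sum_sum_agree A, sum_sum_agree Aᶜ]

lemma integrable_purity {d n : ℕ} [NeZero d] (μ : Measure (EuclideanSpace ℂ (Fin n → ZMod d)))
    [IsProbabilityMeasure μ] (hs : μ {z | ‖z‖ ≠ 1} = 0) (A : Finset (Fin n)) :
    Integrable (fun z : EuclideanSpace ℂ (Fin n → ZMod d) => purity A (fun k => z k)) μ := by
  have hrew : (fun z : EuclideanSpace ℂ (Fin n → ZMod d) => purity A (fun k => z k)) =
      fun z => ∑ k, ∑ k', ∑ l, ∑ l', mono k k' l l' z *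
        ((agree A k' l : ℂ) * (agree A k l' : ℂ) * (agree Aᶜ k l : ℂ) *
          (agree Aᶜ k' l' : ℂ)) := by
    funext z
    unfold purity mono
    exact Finset.sum_congr rfl fun k _ => Finset.sum_congr rfl fun k' _ =>
      Finset.sum_congr rfl fun l _ => Finset.sum_congr rfl fun l' _ => by ring
  rw [hrew]
  exact integrable_finset_sum _ fun k _ => integrable_finset_sum _ fun k' _ =>
    integrable_finset_sum _ fun l _ => integrable_finset_sum _ fun l' _ =>
      (integrable_mono μ hs k k' l l').mul_const _


/-- The first moment of the Hamiltonian with respect to the uniform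
measure on the sphere is `⟨H⟩_0 = ∫ π_ME dμ = (d^{⌊n/2⌋} + d^{⌈n/2⌉})/(d^n + 1)`. -/
theorem first_moment (d n : ℕ) [NeZero d] (hd : 2 ≤ d) (hn : 1 ≤ n)
    (μ : Measure (EuclideanSpace ℂ (Fin n → ZMod d))) (hμ : IsUniformSphereMeasure μ) :
    ∫ z, Hham z ∂μ =
      ((d : ℂ) ^ (n / 2) + (d : ℂ) ^ ((n + 1) / 2)) / ((d : ℂ) ^ n + 1) := by
  obtain ⟨hprob, hs, hu⟩ := hμ
  haveI := hprob
  have hd1 : 1 ≤ d := le_trans one_le_two hd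
  have hcardnat : Fintype.card (Fin n → ZMod d) = d ^ n := by
    rw [Fintype.card_fun, ZMod.card d, Fintype.card_fin]
  have hcard : 2 ≤ Fintype.card (Fin n → ZMod d) := by
    rw [hcardnat]
    calc 2 ≤ d := hd
      _ = d ^ 1 := (pow_one d).symm
      _ ≤ d ^ n := Nat.pow_le_pow_right hd1 hn
  have hH : (fun z : EuclideanSpace ℂ (Fin n → ZMod d) => Hham z) =
      fun z => ((n.choose (n / 2) : ℂ))⁻¹ *
        ∑ A ∈ (Finset.univ : Finset (Fin n)).powersetCard (n / 2), purity A (fun k => z k) := by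
    funext z
    rfl
  rw [hH, integral_const_mul, integral_finset_sum _ (fun A _ => integrable_purity μ hs A)]
  have hval : ∀ A ∈ (Finset.univ : Finset (Fin n)).powersetCard (n / 2),
      ∫ z, purity A (fun k => z k) ∂μ =
      (1 / ((d : ℂ) ^ n * ((d : ℂ) ^ n + 1))) *
        ((d : ℂ) ^ n * (d : ℂ) ^ ((n + 1) / 2) + (d : ℂ) ^ n * (d : ℂ) ^ (n / 2)) := by
    intro A hA
    obtain ⟨-, hAcard⟩ := Finset.mem_powersetCard.mp hA
    have hAc : Aᶜ.card = n - n / 2 := by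
      rw [Finset.card_compl, Fintype.card_fin, hAcard]
    rw [integral_purity μ hs hu hcard A, hAcard, hAc]
    have he1 : n - n / 2 = (n + 1) / 2 := by omega
    rw [he1]
    rw [show n - (n + 1) / 2 = n / 2 by omega]
    have hcastN : (Fintype.card (Fin n → ZMod d) : ℂ) = (d : ℂ) ^ n := by
      rw [hcardnat]
      push_cast
      ring
    rw [hcastN]
  rw [Finset.sum_congr rfl hval, Finset.sum_const, Finset.card_powersetCard,
    Finset.card_univ, Fintype.card_fin, nsmul_eq_mul]
  have hchoose : ((n.choose (n / 2) : ℂ)) ≠ 0 := by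
    simp only [Ne, Nat.cast_eq_zero]
    exact Nat.choose_pos (Nat.div_le_self n 2) |>.ne'
  have hD0 : (d : ℂ) ^ n ≠ 0 := by
    apply pow_ne_zero
    simp only [Ne, Nat.cast_eq_zero]
    omega
  have hD1 : (d : ℂ) ^ n + 1 ≠ 0 := by
    intro hc
    have h2 : ((d ^ n + 1 : ℕ) : ℂ) = 0 := by push_cast; linear_combination hc
    have h3 : d ^ n + 1 = 0 := Nat.cast_eq_zero.mp h2
    omega
  field_simp
  ring
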